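/- Let k be an algebraically closed field and A a commutative finitely generated k-algebra. Let S ⊆ Spec A be a closed subset, let C_1, …, C_r be irreducible closed subsets of Spec A with C_i ⊄ S for each i, and let Y_1, …, Y_m be irreducible closed subsets of Spec A each of Krull dimension at least 1. Then there exists an element f ∈ A such that f vanishes identically on S (i.e., S ⊆ V(f)), V(f) does not contain any C_i, and V(f) ∩ Y_j ≠ ∅ for every j. (This is the choice of cutting function in the inductive step of the proof of Theorem 3.5 on the existence of enough measuring subvarieties.) -/

import Mathlib

open PrimeSpectrum

/-- In a Jacobson space, an irreducible closed set of Krull dimension at least one contains a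
closed point outside any given finite set. -/
lemma exists_closedPoint_notMem {X : Type*} [TopologicalSpace X] [JacobsonSpace X] [QuasiSober X]
    {Y : Set X} (hYc : IsClosed Y) (hYirr : IsIrreducible Y)
    (hYdim : 1 ≤ topologicalKrullDim ↥Y) (F : Set X) (hF : F.Finite) :
    ∃ y ∈ Y, IsClosed ({y} : Set X) ∧ y ∉ F := by
  by_contra h
  push_neg at h
  -- every closed point of `Y` lies in `F`
  have hsub : Y ∩ closedPoints X ⊆ F := fun y hy => h y hy.1 hy.2
  have hfin : (Y ∩ closedPoints X).Finite := hF.subset hsub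
  have hclosed : IsClosed (Y ∩ closedPoints X) := by
    have heq : Y ∩ closedPoints X = ⋃ y ∈ Y ∩ closedPoints X, ({y} : Set X) :=
      (Set.biUnion_of_singleton _).symm
    rw [heq]
    exact hfin.isClosed_biUnion fun y hy => hy.2
  have hYeq : Y = Y ∩ closedPoints X := by
    conv_lhs => rw [← closure_inter_closedPoints hYc]
    exact hclosed.closure_eq
  have hYCP : Y ⊆ closedPoints X := fun x hx => ((Set.ext_iff.mp hYeq x).mp hx).2
  -- hence the generic point of `Y` is closed, so `Y` is a singleton
  have hgen := hYirr.closure_genericPoint hYc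
  have hηY : hYirr.genericPoint ∈ Y := by
    have h0 : hYirr.genericPoint ∈ closure ({hYirr.genericPoint} : Set X) := subset_closure rfl
    rwa [hgen] at h0
  have hηc : IsClosed ({hYirr.genericPoint} : Set X) := hYCP hηY
  have hYsingle : Y = {hYirr.genericPoint} := hgen.symm.trans hηc.closure_eq
  have hsub2 : Subsingleton ↥Y := by
    rw [hYsingle]; infer_instance
  have : Subsingleton (TopologicalSpace.IrreducibleCloseds ↥Y) := by
    constructor
    intro s t
    have hs : s.carrier = Set.univ := Set.eq_univ_of_forall fun x =>
      (Subsingleton.elim x s.isIrreducible'.nonempty.choose) ▸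
        s.isIrreducible'.nonempty.choose_spec
    have ht : t.carrier = Set.univ := Set.eq_univ_of_forall fun x =>
      (Subsingleton.elim x t.isIrreducible'.nonempty.choose) ▸
        t.isIrreducible'.nonempty.choose_spec
    exact TopologicalSpace.IrreducibleCloseds.ext (hs.trans ht.symm)
  have hle : topologicalKrullDim ↥Y ≤ 0 := Order.krullDim_nonpos_of_subsingleton
  exact absurd (le_trans hYdim hle) (by decide)

/-- **Choice of cutting function** (inductive step in the proof of Theorem 3.5). Let `k` be an
algebraically closed field and `A` a finitely generated `k`-algebra. Given a closed subset `S` of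
`Spec A`, irreducible closed subsets `C 1, …, C r` none of which is contained in `S`, and
irreducible closed subsets `Y 1, …, Y m` each of Krull dimension at least `1`, there exists
`f ∈ A` vanishing identically on `S`, such that `V(f)` contains no `C i` and `V(f)` meets every
`Y j`. -/
theorem exists_cutting_function
    (k : Type) [Field k] [IsAlgClosed k]
    (A : Type) [CommRing A] [Algebra k A] [Algebra.FiniteType k A]
    (S : Set (PrimeSpectrum A)) (hS : IsClosed S)
    (r m : ℕ) (C : Fin r → Set (PrimeSpectrum A)) (Y : Fin m → Set (PrimeSpectrum A))
    (hCclosed : ∀ i, IsClosed (C i)) (hCirr : ∀ i, IsIrreducible (C i))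
    (hCS : ∀ i, ¬ C i ⊆ S)
    (hYclosed : ∀ j, IsClosed (Y j)) (hYirr : ∀ j, IsIrreducible (Y j))
    (hYdim : ∀ j, 1 ≤ topologicalKrullDim ↥(Y j)) :
    ∃ f : A, S ⊆ zeroLocus {f} ∧ (∀ i, ¬ C i ⊆ zeroLocus {f}) ∧
      ∀ j, (zeroLocus {f} ∩ Y j).Nonempty := by
  classical
  haveI : IsJacobsonRing A := isJacobsonRing_of_finiteType (A := k)
  -- generic points of the `C i`
  set p : Fin r → PrimeSpectrum A := fun i => (hCirr i).genericPoint with hp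
  have hpC : ∀ i, closure ({p i} : Set (PrimeSpectrum A)) = C i := fun i =>
    (hCirr i).closure_genericPoint (hCclosed i)
  have hpCmem : ∀ i, p i ∈ C i := fun i => (hpC i) ▸ subset_closure rfl
  have hpS : ∀ i, p i ∉ S := by
    intro i hmem
    exact hCS i (by rw [← hpC i, ← hS.closure_eq]; exact closure_mono (Set.singleton_subset_iff.mpr hmem))
  have hIS : ∀ i, ¬ vanishingIdeal S ≤ (p i).asIdeal := by
    intro i hle
    apply hpS i
    have : p i ∈ zeroLocus (vanishingIdeal S : Set A) := fun f hf => hle hf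
    rwa [zeroLocus_vanishingIdeal_eq_closure, hS.closure_eq] at this
  -- closed points in the `Y j` avoiding all `p i`
  have hy : ∀ j, ∃ y ∈ Y j, IsClosed ({y} : Set (PrimeSpectrum A)) ∧ y ∉ Set.range p :=
    fun j => exists_closedPoint_notMem (hYclosed j) (hYirr j) (hYdim j) _ (Set.finite_range p)
  choose y hyY hyC hyF using hy
  have hymax : ∀ j, (y j).asIdeal.IsMaximal := fun j =>
    (isClosed_singleton_iff_isMaximal _).mp (hyC j)
  set J : Ideal A := vanishingIdeal S ⊓ (Finset.univ.inf fun j => (y j).asIdeal) with hJ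
  have hJS : J ≤ vanishingIdeal S := inf_le_left
  have hJy : ∀ j, J ≤ (y j).asIdeal := fun j =>
    le_trans inf_le_right (Finset.inf_le (Finset.mem_univ j))
  have hJp : ∀ i, ¬ J ≤ (p i).asIdeal := by
    intro i hle
    rcases ((p i).isPrime.inf_le).mp hle with h | h
    · exact hIS i h
    rcases ((p i).isPrime.inf_le').mp h with ⟨j, _, hle'⟩
    have : (y j).asIdeal = (p i).asIdeal := ((hymax j).eq_of_le (p i).isPrime.ne_top hle')
    exact hyF j ⟨i, (PrimeSpectrum.ext this).symm⟩
  -- prime avoidance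
  rcases Nat.eq_zero_or_pos r with hr | hr
  · refine ⟨0, ?_, ?_, ?_⟩
    · intro x _; simp [mem_zeroLocus]
    · intro i; exact absurd i.2 (by omega)
    · intro j; exact ⟨y j, by simp [mem_zeroLocus], hyY j⟩
  have hnot : ¬ ((J : Set A) ⊆ ⋃ i ∈ ((Finset.univ : Finset (Fin r)) : Set (Fin r)), ((p i).asIdeal : Set A)) := by
    rw [Ideal.subset_union_prime ⟨0, hr⟩ ⟨0, hr⟩ (fun i _ _ _ => (p i).isPrime)]
    rintro ⟨i, _, hle⟩
    exact hJp i hle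
  rw [Set.not_subset] at hnot
  obtain ⟨f, hfJ, hfp⟩ := hnot
  simp only [Set.mem_iUnion, not_exists, SetLike.mem_coe] at hfp
  refine ⟨f, ?_, ?_, ?_⟩
  · intro x hx
    rw [mem_zeroLocus, Set.singleton_subset_iff]
    exact (mem_vanishingIdeal _ _).mp (hJS hfJ) x hx
  · intro i hsub
    have := hsub (hpCmem i)
    rw [mem_zeroLocus, Set.singleton_subset_iff] at this
    exact hfp i (Finset.mem_univ i) this
  · intro j
    refine ⟨y j, ?_, hyY j⟩
    rw [mem_zeroLocus, Set.singleton_subset_iff]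
    exact hJy j hfJ
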